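/- arXiv:1402.5933 — 2 statements merged into one kernel-verified Lean document; each statement's English description precedes it below -/
import Mathlib

section
/- Let Ω ⊆ ℝ^N be an open set, let a₁, …, a_n ∈ closure(Ω) be pairwise distinct (n ≥ 2), and for each i ∈ {1, …, n} let φ_i : Ω \ {a₁, …, a_n} → ℝ be twice continuously differentiable with φ_i(x) > 0 and Δφ_i(x) = 0 for all x ∈ Ω \ {a₁, …, a_n}. Then for every u ∈ C_c^1(Ω \ {a₁, …, a_n}): ∫_Ω |∇u|² dx − (1/n²) ∑_{1≤i<j≤n} ∫_Ω |∇φ_i/φ_i − ∇φ_j/φ_j|² u² dx = ∫_Ω |∇( u ∏_{i=1}^n φ_i^{−1/n} )|² ∏_{i=1}^n φ_i^{2/n} dx. -/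
open MeasureTheory InnerProductSpace

theorem contGlue {α X : Type*} [TopologicalSpace α] [TopologicalSpace X] [Zero X]
    {f : α → X} {U K : Set α} (hU : IsOpen U) (hK : IsClosed K) (hKU : K ⊆ U)
    (h1 : ContinuousOn f U) (h0 : ∀ x ∉ K, f x = 0) : Continuous f := by
  rw [continuous_iff_continuousAt]
  intro x
  by_cases hx : x ∈ U
  · exact h1.continuousAt (hU.mem_nhds hx)
  · have hxK : x ∈ Kᶜ := fun h => hx (hKU h)
    have hev : (fun _ => (0 : X)) =ᶠ[nhds x] f := by
      filter_upwards [hK.isOpen_compl.mem_nhds hxK] with y hy using (h0 y hy).symm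
    exact continuousAt_const.congr hev

theorem hasFDerivAt_of_nmem {X Y : Type*} [NormedAddCommGroup X] [NormedSpace ℝ X]
    [NormedAddCommGroup Y] [NormedSpace ℝ Y] {f : X → Y} {K : Set X} (hK : IsClosed K)
    (h0 : ∀ x ∉ K, f x = 0) {x : X} (hx : x ∉ K) : HasFDerivAt f (0 : X →L[ℝ] Y) x := by
  have hev : f =ᶠ[nhds x] fun _ => (0 : Y) := by
    filter_upwards [hK.isOpen_compl.mem_nhds hx] with y hy using h0 y hy
  exact (hasFDerivAt_const (0 : Y) x).congr_of_eventuallyEq hev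

theorem ibp {N : ℕ} (h : EuclideanSpace ℝ (Fin N) → ℝ) (v : EuclideanSpace ℝ (Fin N))
    (hd : Differentiable ℝ h) (hc : Continuous fun x => fderiv ℝ h x v)
    (hcs : HasCompactSupport h) : ∫ x, fderiv ℝ h x v = 0 := by
  have h1 : Integrable h := hd.continuous.integrable_of_hasCompactSupport hcs
  have hcs' : HasCompactSupport fun x => fderiv ℝ h x v :=
    (hcs.fderiv ℝ).comp_left (g := fun L : _ →L[ℝ] ℝ => L v) rfl
  have h2 : Integrable (fun x => fderiv ℝ h x v) := hc.integrable_of_hasCompactSupport hcs'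
  have key := integral_mul_fderiv_eq_neg_fderiv_mul_of_integrable
    (f := fun _ : EuclideanSpace ℝ (Fin N) => (1 : ℝ)) (g := h) (v := v) (μ := volume)
    ?_ ?_ ?_ ?_ ?_
  · simpa using key
  · simpa using (integrable_zero _ _ (volume : Measure (EuclideanSpace ℝ (Fin N))))
  · simpa using h2
  · simpa using h1
  · exact fun x _ => differentiableAt_const _
  · exact fun x _ => hd x

theorem pair_sum_identity {n : ℕ} {X : Type*} [NormedAddCommGroup X] [InnerProductSpace ℝ X]
    (v : Fin n → X) :
    ∑ p ∈ Finset.univ.filter (fun p : Fin n × Fin n => p.1 < p.2), ‖v p.1 - v p.2‖ ^ 2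
      = n * ∑ i, ‖v i‖ ^ 2 - ‖∑ i, v i‖ ^ 2 := by
  have hS : ∑ p : Fin n × Fin n, ‖v p.1 - v p.2‖ ^ 2
      = 2 * ((n : ℝ) * ∑ i, ‖v i‖ ^ 2 - ‖∑ i, v i‖ ^ 2) := by
    rw [Fintype.sum_prod_type]
    have : ∀ i j : Fin n, ‖v i - v j‖ ^ 2
        = ‖v i‖ ^ 2 - 2 * (inner ℝ (v i) (v j) : ℝ) + ‖v j‖ ^ 2 := fun i j => norm_sub_sq_real _ _
    simp_rw [this, Finset.sum_add_distrib, Finset.sum_sub_distrib, ← Finset.mul_sum,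
      ← inner_sum, Finset.sum_const, Finset.card_univ, Fintype.card_fin, nsmul_eq_mul,
      ← sum_inner, real_inner_self_eq_norm_sq]
    rw [← Finset.mul_sum]
    ring
  have hdiag : ∀ p : Fin n × Fin n, p.1 = p.2 → ‖v p.1 - v p.2‖ ^ 2 = 0 := by
    intro p hp; rw [hp]; simp
  have hswap : ∑ p ∈ Finset.univ.filter (fun p : Fin n × Fin n => p.2 < p.1),
      ‖v p.1 - v p.2‖ ^ 2
      = ∑ p ∈ Finset.univ.filter (fun p : Fin n × Fin n => p.1 < p.2), ‖v p.1 - v p.2‖ ^ 2 := by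
    refine Finset.sum_equiv (Equiv.prodComm (Fin n) (Fin n)) ?_ ?_
    · intro p; simp [Equiv.prodComm]
    · intro p _; simp [Equiv.prodComm, norm_sub_rev]
  have hnotlt : ∑ p ∈ Finset.univ.filter (fun p : Fin n × Fin n => ¬ p.1 < p.2),
      ‖v p.1 - v p.2‖ ^ 2
      = ∑ p ∈ Finset.univ.filter (fun p : Fin n × Fin n => p.2 < p.1), ‖v p.1 - v p.2‖ ^ 2 := by
    symm
    refine Finset.sum_subset ?_ ?_
    · intro p hp
      simp only [Finset.mem_filter, Finset.mem_univ, true_and] at hp ⊢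
      exact not_lt.2 hp.le
    · intro p hp hp'
      simp only [Finset.mem_filter, Finset.mem_univ, true_and, not_lt] at hp hp'
      exact hdiag p (le_antisymm hp' hp)
  have := Finset.sum_filter_add_sum_filter_not Finset.univ
    (fun p : Fin n × Fin n => p.1 < p.2) (fun p => ‖v p.1 - v p.2‖ ^ 2)
  rw [hnotlt, hswap] at this
  rw [hS] at this
  linarith


noncomputable def lap {N : ℕ} (φ : EuclideanSpace ℝ (Fin N) → ℝ)
    (x : EuclideanSpace ℝ (Fin N)) : ℝ :=
  ∑ i : Fin N, fderiv ℝ (fun y => fderiv ℝ φ y (EuclideanSpace.single i 1)) x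
    (EuclideanSpace.single i 1)

variable {N : ℕ}
local notation "E" => EuclideanSpace ℝ (Fin N)
local notation "e" k => EuclideanSpace.single k (1:ℝ)

theorem grad_coord (f : E → ℝ) (x : E) (k : Fin N) :
    gradient f x k = fderiv ℝ f x (e k) := by
  have h1 : (inner ℝ (gradient f x) (EuclideanSpace.single k (1:ℝ)) : ℝ) = fderiv ℝ f x (e k) := by
    rw [gradient, toDual_symm_apply]
  rw [EuclideanSpace.inner_single_right] at h1
  simpa using h1

theorem norm_sq_coord (w : E) : ‖w‖ ^ 2 = ∑ k, w k ^ 2 := by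
  rw [EuclideanSpace.norm_eq, Real.sq_sqrt (by positivity)]
  exact Finset.sum_congr rfl fun k _ => by rw [Real.norm_eq_abs, sq_abs]

theorem inner_coord (w w' : E) : (inner ℝ w w' : ℝ) = ∑ k, w k * w' k := by
  simp [PiLp.inner_apply, RCLike.inner_apply, conj_trivial]
  exact Finset.sum_congr rfl fun _ _ => mul_comm _ _

theorem hasFDerivAt_prod_rpow {n : ℕ} (φ : Fin n → E → ℝ) {U : Set E} (hU : IsOpen U)
    (hdiff : ∀ i, ∀ x ∈ U, DifferentiableAt ℝ (φ i) x)
    (hpos : ∀ i, ∀ x ∈ U, 0 < φ i x) (c : ℝ) {x : E} (hx : x ∈ U) :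
    HasFDerivAt (fun y => ∏ i, φ i y ^ c)
      ((∏ i, φ i x ^ c) • ∑ i, (c * (φ i x)⁻¹) • fderiv ℝ (φ i) x) x := by
  set S : E → ℝ := fun y => ∑ i, c * Real.log (φ i y) with hS
  have hSd : HasFDerivAt S (∑ i, (c * (φ i x)⁻¹) • fderiv ℝ (φ i) x) x := by
    refine HasFDerivAt.fun_sum fun i _ => ?_
    have h1 : HasFDerivAt (fun y => Real.log (φ i y)) ((φ i x)⁻¹ • fderiv ℝ (φ i) x) x :=
      (hdiff i x hx).hasFDerivAt.log (ne_of_gt (hpos i x hx))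
    simpa [smul_smul] using h1.const_mul c
  have hexp : HasFDerivAt (fun y => Real.exp (S y))
      (Real.exp (S x) • ∑ i, (c * (φ i x)⁻¹) • fderiv ℝ (φ i) x) x :=
    (Real.hasDerivAt_exp (S x)).comp_hasFDerivAt x hSd
  have hPS : ∀ y ∈ U, (∏ i, φ i y ^ c) = Real.exp (S y) := by
    intro y hy
    rw [hS]
    simp only [Real.exp_sum]
    refine Finset.prod_congr rfl fun i _ => ?_
    rw [Real.rpow_def_of_pos (hpos i y hy), mul_comm]
  have hev : (fun y => ∏ i, φ i y ^ c) =ᶠ[nhds x] fun y => Real.exp (S y) := by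
    filter_upwards [hU.mem_nhds hx] with y hy using hPS y hy
  have h2 := hexp.congr_of_eventuallyEq hev
  rwa [← hPS x hx] at h2

theorem div_term {f : E → ℝ} {U : Set E} (hU : IsOpen U)
    (hf : ContDiffOn ℝ 2 f U) {x : E} (hx : x ∈ U) (hfx : f x ≠ 0)
    (u : E → ℝ) (hu : ContDiff ℝ 1 u) :
    ∑ k, fderiv ℝ (fun y => u y ^ 2 * ((f y)⁻¹ * fderiv ℝ f y (e k))) x (e k)
      = 2 * u x * inner ℝ (gradient u x) ((f x)⁻¹ • gradient f x)
        - u x ^ 2 * ‖(f x)⁻¹ • gradient f x‖ ^ 2 + u x ^ 2 * ((f x)⁻¹ * lap f x) := by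
  have hud := (hu.differentiable one_ne_zero x).hasFDerivAt
  have hfdiffat : DifferentiableAt ℝ f x :=
    (hf.differentiableOn (by norm_num)).differentiableAt (hU.mem_nhds hx)
  have hfd1 : ContDiffOn ℝ 1 (fderiv ℝ f) U := hf.fderiv_of_isOpen hU (by norm_num)
  have hfd1at : DifferentiableAt ℝ (fderiv ℝ f) x :=
    (hfd1.differentiableOn one_ne_zero).differentiableAt (hU.mem_nhds hx)
  have hu2 : HasFDerivAt (fun y => u y ^ 2) ((2 * u x) • fderiv ℝ u x) x := by
    have h := hud.fun_mul hud
    have e1 : (fun y => u y * u y) = fun y => u y ^ 2 := by ext y; ring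
    rw [e1] at h
    refine h.congr_fderiv (Eq.symm ?_)
    rw [two_mul, add_smul]
  have key : ∀ k : Fin N,
      fderiv ℝ (fun y => u y ^ 2 * ((f y)⁻¹ * fderiv ℝ f y (e k))) x (e k)
        = u x ^ 2 * ((f x)⁻¹ * fderiv ℝ (fun y => fderiv ℝ f y (e k)) x (e k)
            - (f x ^ 2)⁻¹ * (fderiv ℝ f x (e k) * fderiv ℝ f x (e k)))
          + ((f x)⁻¹ * fderiv ℝ f x (e k)) * (2 * u x * fderiv ℝ u x (e k)) := by
    intro k
    have hB : HasFDerivAt (fun y => fderiv ℝ f y (e k))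
        (fderiv ℝ (fun y => fderiv ℝ f y (e k)) x) x :=
      (hfd1at.clm_apply (differentiableAt_const _)).hasFDerivAt
    have hinv : HasFDerivAt (fun y => (f y)⁻¹) ((-(f x ^ 2)⁻¹) • fderiv ℝ f x) x :=
      (hasDerivAt_inv hfx).comp_hasFDerivAt x hfdiffat.hasFDerivAt
    have hψ := hinv.fun_mul hB
    have hh := hu2.fun_mul hψ
    rw [hh.fderiv]
    simp only [ContinuousLinearMap.add_apply, ContinuousLinearMap.smul_apply,
      smul_eq_mul, ContinuousLinearMap.coe_smul', Pi.smul_apply,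
      ContinuousLinearMap.neg_apply]
    ring
  rw [Finset.sum_congr rfl fun k _ => key k]
  have hcoordf : ∀ k : Fin N, ((f x)⁻¹ • gradient f x) k = (f x)⁻¹ * fderiv ℝ f x (e k) := by
    intro k; rw [PiLp.smul_apply, smul_eq_mul, grad_coord]
  rw [inner_coord, norm_sq_coord, lap]
  simp_rw [hcoordf, grad_coord]
  rw [Finset.mul_sum, Finset.mul_sum, Finset.mul_sum, Finset.mul_sum,
    ← Finset.sum_sub_distrib, ← Finset.sum_add_distrib]
  exact Finset.sum_congr rfl fun k _ => by ring

theorem inner_grad (f : E → ℝ) (x w : E) : (inner ℝ (gradient f x) w : ℝ) = fderiv ℝ f x w := by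
  rw [gradient, toDual_symm_apply]

theorem grad_of_fderiv (f : E → ℝ) (x : E) (g : E)
    (h : HasFDerivAt f ((toDual ℝ (EuclideanSpace ℝ (Fin N))) g) x) : gradient f x = g :=
  HasGradientAt.gradient (hasGradientAt_iff_hasFDerivAt.2 h)

theorem grad_zero_of_nmem {f : E → ℝ} {K : Set E} (hK : IsClosed K)
    (h0 : ∀ x ∉ K, f x = 0) {x : E} (hx : x ∉ K) : gradient f x = 0 := by
  refine grad_of_fderiv f x 0 ?_
  simpa using hasFDerivAt_of_nmem hK h0 hx

theorem grad_cont (f : E → ℝ) (h : Continuous (fderiv ℝ f)) : Continuous (gradient f) :=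
  (LinearIsometryEquiv.continuous (toDual ℝ (EuclideanSpace ℝ (Fin N))).symm).comp h

theorem grad_contOn (f : E → ℝ) {U : Set E} (h : ContinuousOn (fderiv ℝ f) U) :
    ContinuousOn (gradient f) U :=
  (LinearIsometryEquiv.continuous (toDual ℝ (EuclideanSpace ℝ (Fin N))).symm).comp_continuousOn h

theorem stmt9 (N n : ℕ) (hn : 2 ≤ n)
    (Ω : Set (EuclideanSpace ℝ (Fin N))) (hΩo : IsOpen Ω)
    (a : Fin n → EuclideanSpace ℝ (Fin N)) (ha : ∀ i, a i ∈ closure Ω)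
    (hinj : Function.Injective a)
    (φ : Fin n → EuclideanSpace ℝ (Fin N) → ℝ)
    (hφ : ∀ i, ContDiffOn ℝ 2 (φ i) (Ω \ Set.range a))
    (hφpos : ∀ i, ∀ x ∈ Ω \ Set.range a, 0 < φ i x)
    (hφharm : ∀ i, ∀ x ∈ Ω \ Set.range a, lap (φ i) x = 0)
    (u : EuclideanSpace ℝ (Fin N) → ℝ) (hu : ContDiff ℝ 1 u)
    (hcs : HasCompactSupport u) (hsupp : tsupport u ⊆ Ω \ Set.range a) :
    (∫ x in Ω, ‖gradient u x‖ ^ 2) -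
        (1 / (n : ℝ) ^ 2) *
          ∑ p ∈ Finset.univ.filter (fun p : Fin n × Fin n => p.1 < p.2),
            ∫ x in Ω,
              ‖(φ p.1 x)⁻¹ • gradient (φ p.1) x - (φ p.2 x)⁻¹ • gradient (φ p.2) x‖ ^ 2 *
                u x ^ 2
      = ∫ x in Ω,
          ‖gradient (fun y => u y * ∏ i, φ i y ^ (-(1 / (n : ℝ)))) x‖ ^ 2 *
            ∏ i, φ i x ^ ((2 : ℝ) / (n : ℝ)) := by
  classical
  have hNn : (n : ℝ) ≠ 0 := Nat.cast_ne_zero.2 (by omega)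
  set U : Set (EuclideanSpace ℝ (Fin N)) := Ω \ Set.range a with hUdef
  have hUo : IsOpen U := hΩo.sdiff (Set.finite_range a).isClosed
  have hsupp' : tsupport u ⊆ U := hsupp
  have hKcl : IsClosed (tsupport u) := isClosed_closure
  have hu0 : ∀ x ∉ tsupport u, u x = 0 := fun x hx => image_eq_zero_of_notMem_tsupport hx
  have hgu0 : ∀ x ∉ tsupport u, gradient u x = 0 := fun x hx => grad_zero_of_nmem hKcl hu0 hx
  have hφdiffat : ∀ i, ∀ x ∈ U, DifferentiableAt ℝ (φ i) x := fun i x hx =>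
    ((hφ i).differentiableOn (by norm_num)).differentiableAt (hUo.mem_nhds hx)
  -- abbreviations (plain defs, defeq to goal pieces)
  set F : Fin n → EuclideanSpace ℝ (Fin N) → EuclideanSpace ℝ (Fin N) :=
    fun i x => (φ i x)⁻¹ • gradient (φ i) x with hFdef
  set G : EuclideanSpace ℝ (Fin N) → EuclideanSpace ℝ (Fin N) :=
    fun x => (n : ℝ)⁻¹ • ∑ i, F i x with hGdef
  set P : EuclideanSpace ℝ (Fin N) → ℝ := fun y => ∏ i, φ i y ^ (-(1 / (n : ℝ))) with hPdef
  set Q : EuclideanSpace ℝ (Fin N) → ℝ := fun x => ∏ i, φ i x ^ ((2 : ℝ) / (n : ℝ)) with hQdef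
  -- continuity facts
  have cu : Continuous u := hu.continuous
  have cgu : Continuous (gradient u) := grad_cont u (hu.continuous_fderiv one_ne_zero)
  have cgφ : ∀ i, ContinuousOn (gradient (φ i)) U := fun i =>
    grad_contOn _ ((hφ i).continuousOn_fderiv_of_isOpen hUo (by norm_num))
  have cF : ∀ i, ContinuousOn (F i) U := fun i =>
    (((hφ i).continuousOn).inv₀ fun x hx => ne_of_gt (hφpos i x hx)).smul (cgφ i)
  have cG : ContinuousOn G U := by
    refine continuousOn_const.fun_smul ?_
    exact continuousOn_finset_sum _ fun i _ => cF i
  -- integrability/conversion machinery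
  have mk : ∀ f : EuclideanSpace ℝ (Fin N) → ℝ, ContinuousOn f U →
      (∀ x ∉ tsupport u, f x = 0) →
      Integrable f volume ∧ (∫ x in Ω, f x) = ∫ x, f x := by
    intro f hcont h0
    have hc : Continuous f := contGlue hUo hKcl hsupp' hcont h0
    have hcs2 : HasCompactSupport f := HasCompactSupport.intro hcs h0
    refine ⟨hc.integrable_of_hasCompactSupport hcs2, ?_⟩
    exact setIntegral_eq_integral_of_forall_compl_eq_zero fun x hx =>
      h0 x fun hmem => hx (hsupp' hmem).1
  -- gradient of u*P on U
  have hPd : ∀ x ∈ U, HasFDerivAt P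
      ((P x) • ∑ i, ((-(1 / (n : ℝ))) * (φ i x)⁻¹) • fderiv ℝ (φ i) x) x := fun x hx =>
    hasFDerivAt_prod_rpow φ hUo hφdiffat hφpos _ hx
  have hgradUP : ∀ x ∈ U, gradient (fun y => u y * P y) x
      = P x • (gradient u x - u x • G x) := by
    intro x hx
    refine grad_of_fderiv _ _ _ ?_
    have hud := (hu.differentiable one_ne_zero x).hasFDerivAt
    have h1 := hud.fun_mul (hPd x hx)
    refine h1.congr_fderiv (Eq.symm ?_)
    refine ContinuousLinearMap.ext fun w => ?_
    simp only [toDual_apply_apply, ContinuousLinearMap.add_apply, ContinuousLinearMap.smul_apply,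
      ContinuousLinearMap.coe_sum', Finset.sum_apply, smul_eq_mul]
    rw [real_inner_smul_left, inner_sub_left, inner_grad, real_inner_smul_left, hGdef]
    simp only [real_inner_smul_left, sum_inner]
    have hFi : ∀ i : Fin n, (inner ℝ (F i x) w : ℝ) = (φ i x)⁻¹ * fderiv ℝ (φ i) x w := by
      intro i
      simp only [hFdef]
      rw [real_inner_smul_left, inner_grad]
    rw [Finset.sum_congr rfl fun i _ => hFi i]
    try simp only [ContinuousLinearMap.smul_apply, smul_eq_mul]
    simp_rw [mul_assoc]
    rw [← Finset.mul_sum]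
    ring
  have hPQ : ∀ x ∈ U, P x ^ 2 * Q x = 1 := by
    intro x hx
    show (∏ i, φ i x ^ (-(1 / (n : ℝ)))) ^ 2 * (∏ i, φ i x ^ ((2 : ℝ) / (n : ℝ))) = 1
    rw [← Finset.prod_pow, ← Finset.prod_mul_distrib]
    refine Finset.prod_eq_one fun i _ => ?_
    have hp := hφpos i x hx
    rw [← Real.rpow_natCast (φ i x ^ (-(1 / (n : ℝ)))) 2, ← Real.rpow_mul hp.le,
      ← Real.rpow_add hp]
    rw [show -(1 / (n : ℝ)) * (2 : ℕ) + 2 / (n : ℝ) = 0 by push_cast; ring, Real.rpow_zero]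
  have hgradUP0 : ∀ x ∉ tsupport u, gradient (fun y => u y * P y) x = 0 := by
    intro x hx
    exact grad_zero_of_nmem hKcl (fun y hy => by rw [hu0 y hy, zero_mul]) hx
  -- pointwise identity for the RHS integrand
  have hI3M : ∀ x, ‖gradient (fun y => u y * P y) x‖ ^ 2 * Q x
      = ‖gradient u x - u x • G x‖ ^ 2 := by
    intro x
    by_cases hx : x ∈ U
    · rw [hgradUP x hx, norm_smul, mul_pow, Real.norm_eq_abs, sq_abs]
      calc P x ^ 2 * ‖gradient u x - u x • G x‖ ^ 2 * Q x
          = P x ^ 2 * Q x * ‖gradient u x - u x • G x‖ ^ 2 := by ring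
        _ = ‖gradient u x - u x • G x‖ ^ 2 := by rw [hPQ x hx, one_mul]
    · have hxt : x ∉ tsupport u := fun hmem => hx (hsupp' hmem)
      rw [hgradUP0 x hxt, hgu0 x hxt, hu0 x hxt]
      simp
  -- pointwise expansion of M
  have hMexp : ∀ x, ‖gradient u x - u x • G x‖ ^ 2
      = ‖gradient u x‖ ^ 2
        - (n : ℝ)⁻¹ * ∑ i, (2 * u x * (inner ℝ (gradient u x) (F i x) : ℝ))
        + u x ^ 2 * ‖G x‖ ^ 2 := by
    intro x
    have hGi : (inner ℝ (gradient u x) (G x) : ℝ)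
        = (n : ℝ)⁻¹ * ∑ i, (inner ℝ (gradient u x) (F i x) : ℝ) := by
      simp only [hGdef]
      rw [real_inner_smul_right, inner_sum]
    have hT : ∑ i, 2 * u x * (inner ℝ (gradient u x) (F i x) : ℝ)
        = 2 * u x * ∑ i, (inner ℝ (gradient u x) (F i x) : ℝ) := by
      rw [Finset.mul_sum]
    rw [norm_sub_sq_real, real_inner_smul_right, hGi, norm_smul, Real.norm_eq_abs, mul_pow,
      sq_abs, hT]
    ring
  -- continuity of P, Q, gradient(u*P) on U
  have cP : ContinuousOn P U := by
    refine continuousOn_finset_prod _ fun i _ => ?_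
    exact ((hφ i).continuousOn).rpow_const fun x hx => Or.inl (ne_of_gt (hφpos i x hx))
  have cQ : ContinuousOn Q U := by
    refine continuousOn_finset_prod _ fun i _ => ?_
    exact ((hφ i).continuousOn).rpow_const fun x hx => Or.inl (ne_of_gt (hφpos i x hx))
  have cgUP : ContinuousOn (gradient (fun y => u y * P y)) U := by
    refine ContinuousOn.congr ?_ fun x hx => hgradUP x hx
    exact cP.smul ((cgu.continuousOn).sub ((cu.continuousOn).smul cG))
  -- integrable integrands / set-integral conversions
  have hI1 := mk (fun x => ‖gradient u x‖ ^ 2) ((cgu.norm.pow 2).continuousOn)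
    fun x hx => by simp [hgu0 x hx]
  have hCc := mk (fun x => u x ^ 2 * ‖G x‖ ^ 2)
    (((cu.continuousOn).pow 2).mul (cG.norm.pow 2)) fun x hx => by simp [hu0 x hx]
  have hJint : ∀ i : Fin n, Integrable (fun x => u x ^ 2 * ‖F i x‖ ^ 2) volume ∧
      (∫ x in Ω, u x ^ 2 * ‖F i x‖ ^ 2) = ∫ x, u x ^ 2 * ‖F i x‖ ^ 2 := fun i =>
    mk _ (((cu.continuousOn).pow 2).mul ((cF i).norm.pow 2))
      fun x hx => by simp [hu0 x hx]
  have hKint : ∀ i : Fin n,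
      Integrable (fun x => 2 * u x * (inner ℝ (gradient u x) (F i x) : ℝ)) volume := fun i =>
    (mk _ ((continuousOn_const.mul cu.continuousOn).mul ((cgu.continuousOn).inner (cF i)))
      fun x hx => by simp [hu0 x hx]).1
  have hI2 : ∀ p : Fin n × Fin n,
      Integrable (fun x => ‖F p.1 x - F p.2 x‖ ^ 2 * u x ^ 2) volume ∧
      (∫ x in Ω, ‖F p.1 x - F p.2 x‖ ^ 2 * u x ^ 2) = ∫ x, ‖F p.1 x - F p.2 x‖ ^ 2 * u x ^ 2 :=
    fun p => mk _ ((((cF p.1).sub (cF p.2)).norm.pow 2).mul ((cu.continuousOn).pow 2))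
      fun x hx => by simp [hu0 x hx]
  have hI3 := mk (fun x => ‖gradient (fun y => u y * P y) x‖ ^ 2 * Q x)
    ((cgUP.norm.pow 2).mul cQ) fun x hx => by simp [hgradUP0 x hx]
  -- integration by parts
  have hIBP : ∀ i : Fin n,
      (∫ x, 2 * u x * (inner ℝ (gradient u x) (F i x) : ℝ)) = ∫ x, u x ^ 2 * ‖F i x‖ ^ 2 := by
    intro i
    have hCD : ∀ k : Fin N, ContDiffOn ℝ 1
        (fun x => u x ^ 2 * ((φ i x)⁻¹ * fderiv ℝ (φ i) x (EuclideanSpace.single k 1))) U := by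
      intro k
      refine ContDiffOn.mul ((hu.contDiffOn).pow 2) (ContDiffOn.mul
        (((hφ i).of_le one_le_two).inv fun x hx => ne_of_gt (hφpos i x hx)) ?_)
      exact ((hφ i).fderiv_of_isOpen hUo (by norm_num)).clm_apply contDiffOn_const
    have h0k : ∀ k : Fin N, ∀ x ∉ tsupport u,
        u x ^ 2 * ((φ i x)⁻¹ * fderiv ℝ (φ i) x (EuclideanSpace.single k 1)) = 0 := by
      intro k x hx; rw [hu0 x hx]; ring
    have hfd0 : ∀ k : Fin N, ∀ x ∉ tsupport u, fderiv ℝ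
        (fun x => u x ^ 2 * ((φ i x)⁻¹ * fderiv ℝ (φ i) x (EuclideanSpace.single k 1))) x = 0 :=
      fun k x hx => (hasFDerivAt_of_nmem hKcl (h0k k) hx).fderiv
    have hdiffk : ∀ k : Fin N, Differentiable ℝ
        (fun x => u x ^ 2 * ((φ i x)⁻¹ * fderiv ℝ (φ i) x (EuclideanSpace.single k 1))) := by
      intro k x
      by_cases hx : x ∈ U
      · exact ((hCD k).differentiableOn one_ne_zero).differentiableAt (hUo.mem_nhds hx)
      · exact (hasFDerivAt_of_nmem hKcl (h0k k) fun hmem => hx (hsupp' hmem)).differentiableAt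
    have hcontk : ∀ k : Fin N, Continuous fun x => fderiv ℝ
        (fun x => u x ^ 2 * ((φ i x)⁻¹ * fderiv ℝ (φ i) x (EuclideanSpace.single k 1))) x
        (EuclideanSpace.single k 1) := by
      intro k
      refine contGlue hUo hKcl hsupp' ?_ fun x hx => by rw [hfd0 k x hx]; rfl
      exact ((ContinuousLinearMap.apply ℝ ℝ
        (EuclideanSpace.single k (1 : ℝ))).continuous).comp_continuousOn
        ((hCD k).continuousOn_fderiv_of_isOpen hUo le_rfl)
    have hint0 : ∀ k : Fin N, (∫ x, fderiv ℝ
        (fun x => u x ^ 2 * ((φ i x)⁻¹ * fderiv ℝ (φ i) x (EuclideanSpace.single k 1))) x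
        (EuclideanSpace.single k 1)) = 0 :=
      fun k => ibp _ _ (hdiffk k) (hcontk k) (HasCompactSupport.intro hcs (h0k k))
    have hintk : ∀ k : Fin N, Integrable (fun x => fderiv ℝ
        (fun x => u x ^ 2 * ((φ i x)⁻¹ * fderiv ℝ (φ i) x (EuclideanSpace.single k 1))) x
        (EuclideanSpace.single k 1)) volume := fun k =>
      (hcontk k).integrable_of_hasCompactSupport
        (HasCompactSupport.intro hcs fun x hx => by rw [hfd0 k x hx]; rfl)
    have hpt : ∀ x, (∑ k : Fin N, fderiv ℝ
        (fun x => u x ^ 2 * ((φ i x)⁻¹ * fderiv ℝ (φ i) x (EuclideanSpace.single k 1))) x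
        (EuclideanSpace.single k 1))
        = 2 * u x * (inner ℝ (gradient u x) (F i x) : ℝ) - u x ^ 2 * ‖F i x‖ ^ 2 := by
      intro x
      by_cases hx : x ∈ U
      · have hd := div_term hUo (hφ i) hx (ne_of_gt (hφpos i x hx)) u hu
        rw [hd, hφharm i x hx]
        simp only [hFdef]
        ring
      · have hxt : x ∉ tsupport u := fun hmem => hx (hsupp' hmem)
        have hz : ∀ k : Fin N, fderiv ℝ
            (fun x => u x ^ 2 * ((φ i x)⁻¹ * fderiv ℝ (φ i) x (EuclideanSpace.single k 1))) x
            (EuclideanSpace.single k 1) = (0 : ℝ) := fun k => by rw [hfd0 k x hxt]; rfl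
        rw [Finset.sum_congr rfl fun k (_ : k ∈ Finset.univ) => hz k, hu0 x hxt]
        simp
    have hsum0 :
        (∫ x, (2 * u x * (inner ℝ (gradient u x) (F i x) : ℝ) - u x ^ 2 * ‖F i x‖ ^ 2)) = 0 := by
      have h1 := integral_finset_sum (μ := volume) Finset.univ fun k _ => hintk k
      simp only [hpt] at h1
      rw [h1]
      exact Finset.sum_eq_zero fun k _ => hint0 k
    have h2 := integral_sub (hKint i) (hJint i).1
    rw [hsum0] at h2
    linarith [h2.symm]
  -- the pair sum
  have hsum2 : ∑ p ∈ Finset.univ.filter (fun p : Fin n × Fin n => p.1 < p.2),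
      (∫ x, ‖F p.1 x - F p.2 x‖ ^ 2 * u x ^ 2)
      = (n : ℝ) * (∑ i, ∫ x, u x ^ 2 * ‖F i x‖ ^ 2)
        - (n : ℝ) ^ 2 * ∫ x, u x ^ 2 * ‖G x‖ ^ 2 := by
    have hptw : ∀ x, ∑ p ∈ Finset.univ.filter (fun p : Fin n × Fin n => p.1 < p.2),
        (‖F p.1 x - F p.2 x‖ ^ 2 * u x ^ 2)
        = (∑ i, (n : ℝ) * (u x ^ 2 * ‖F i x‖ ^ 2)) - (n : ℝ) ^ 2 * (u x ^ 2 * ‖G x‖ ^ 2) := by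
      intro x
      rw [← Finset.sum_mul, pair_sum_identity (fun i => F i x)]
      have hGn : ‖∑ i, F i x‖ ^ 2 = (n : ℝ) ^ 2 * ‖G x‖ ^ 2 := by
        have hh : ∑ i, F i x = (n : ℝ) • G x := by
          simp only [hGdef]
          rw [smul_smul, mul_inv_cancel₀ hNn, one_smul]
        rw [hh, norm_smul, mul_pow, Real.norm_natCast]
      have h2 : ∑ i, (n : ℝ) * (u x ^ 2 * ‖F i x‖ ^ 2)
          = ((n : ℝ) * u x ^ 2) * ∑ i, ‖F i x‖ ^ 2 := by
        rw [Finset.mul_sum]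
        exact Finset.sum_congr rfl fun i _ => by ring
      rw [hGn, h2]
      ring
    have h3 : (∫ x, ∑ p ∈ Finset.univ.filter (fun p : Fin n × Fin n => p.1 < p.2),
        (‖F p.1 x - F p.2 x‖ ^ 2 * u x ^ 2))
        = ∑ p ∈ Finset.univ.filter (fun p : Fin n × Fin n => p.1 < p.2),
          ∫ x, ‖F p.1 x - F p.2 x‖ ^ 2 * u x ^ 2 :=
      integral_finset_sum _ fun p _ => (hI2 p).1
    rw [← h3]
    have h4 : (∫ x, ∑ p ∈ Finset.univ.filter (fun p : Fin n × Fin n => p.1 < p.2),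
        (‖F p.1 x - F p.2 x‖ ^ 2 * u x ^ 2))
        = ∫ x, ((∑ i, (n : ℝ) * (u x ^ 2 * ‖F i x‖ ^ 2))
            - (n : ℝ) ^ 2 * (u x ^ 2 * ‖G x‖ ^ 2)) :=
      integral_congr_ae (Filter.Eventually.of_forall fun x => hptw x)
    rw [h4, integral_sub (integrable_finset_sum _ fun i _ => ((hJint i).1.const_mul _))
      (hCc.1.const_mul _), integral_finset_sum _ fun i _ => ((hJint i).1.const_mul _),
      integral_const_mul]
    simp_rw [integral_const_mul]
    rw [← Finset.mul_sum]
  -- final assembly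
  have KSint : Integrable (fun x => (n : ℝ)⁻¹ *
      ∑ i, (2 * u x * (inner ℝ (gradient u x) (F i x) : ℝ))) volume :=
    (integrable_finset_sum _ fun i _ => hKint i).const_mul _
  calc (∫ x in Ω, ‖gradient u x‖ ^ 2) - (1 / (n : ℝ) ^ 2) *
        ∑ p ∈ Finset.univ.filter (fun p : Fin n × Fin n => p.1 < p.2),
          ∫ x in Ω, ‖F p.1 x - F p.2 x‖ ^ 2 * u x ^ 2
      = (∫ x, ‖gradient u x‖ ^ 2) - (1 / (n : ℝ) ^ 2) *
          ((n : ℝ) * (∑ i, ∫ x, u x ^ 2 * ‖F i x‖ ^ 2)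
            - (n : ℝ) ^ 2 * ∫ x, u x ^ 2 * ‖G x‖ ^ 2) := by
        rw [hI1.2, ← hsum2]
        congr 1
        rw [Finset.sum_congr rfl fun p _ => (hI2 p).2]
    _ = (∫ x, ‖gradient u x‖ ^ 2)
          - (n : ℝ)⁻¹ * (∑ i, ∫ x, u x ^ 2 * ‖F i x‖ ^ 2)
          + ∫ x, u x ^ 2 * ‖G x‖ ^ 2 := by
        field_simp
        ring
    _ = ∫ x, (‖gradient u x‖ ^ 2
          - (n : ℝ)⁻¹ * ∑ i, (2 * u x * (inner ℝ (gradient u x) (F i x) : ℝ))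
          + u x ^ 2 * ‖G x‖ ^ 2) := by
        have hAK : Integrable (fun x => ‖gradient u x‖ ^ 2 - (n : ℝ)⁻¹ *
            ∑ i, (2 * u x * (inner ℝ (gradient u x) (F i x) : ℝ))) volume := hI1.1.sub KSint
        rw [integral_add hAK hCc.1, integral_sub hI1.1 KSint, integral_const_mul,
          integral_finset_sum _ fun i _ => hKint i,
          Finset.sum_congr rfl fun i (_ : i ∈ Finset.univ) => hIBP i]
    _ = ∫ x, ‖gradient u x - u x • G x‖ ^ 2 :=
        integral_congr_ae (Filter.Eventually.of_forall fun x => (hMexp x).symm)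
    _ = ∫ x, ‖gradient (fun y => u y * P y) x‖ ^ 2 * Q x :=
        integral_congr_ae (Filter.Eventually.of_forall fun x => (hI3M x).symm)
    _ = ∫ x in Ω, ‖gradient (fun y => u y * P y) x‖ ^ 2 * Q x := hI3.2.symm
end

section
/- Let N ≥ 3, n ≥ 2, let Ω ⊆ ℝ^N be an open set, and let a₁, …, a_n ∈ Ω be pairwise distinct points. Then for every u ∈ C_c^1(Ω \ {a₁, …, a_n}): ∫_Ω |∇u|² dx − ((N − 2)²/n²) ∫_Ω V u² dx = ∫_Ω |∇( u ∏_{i=1}^n |x − a_i|^{(N−2)/n} )|² ∏_{i=1}^n |x − a_i|^{−2(N−2)/n} dx, and in particular the left-hand side is nonnegative, and strictly positive for u ≢ 0. -/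
open MeasureTheory InnerProductSpace Real Filter Topology

noncomputable def mpV {N n : ℕ} (a : Fin n → EuclideanSpace ℝ (Fin N))
    (x : EuclideanSpace ℝ (Fin N)) : ℝ :=
  ∑ p ∈ Finset.univ.filter (fun p : Fin n × Fin n => p.1 < p.2),
    ‖a p.1 - a p.2‖ ^ 2 / (‖x - a p.1‖ ^ 2 * ‖x - a p.2‖ ^ 2)

section AuxMP
variable {N n : ℕ}

lemma euclid_decomp (z : EuclideanSpace ℝ (Fin N)) :
    ∑ j, z j • EuclideanSpace.single j (1:ℝ) = z := by
  ext k
  have : (∑ j, z j • EuclideanSpace.single j (1:ℝ)) k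
      = ∑ j, z j * (EuclideanSpace.single j (1:ℝ)) k := by
    rw [WithLp.ofLp_sum, Finset.sum_apply]; rfl
  rw [this]
  simp [EuclideanSpace.single_apply]

lemma clm_apply_eq_sum (L : EuclideanSpace ℝ (Fin N) →L[ℝ] ℝ) (z : EuclideanSpace ℝ (Fin N)) :
    L z = ∑ j, z j * L (EuclideanSpace.single j 1) := by
  conv_lhs => rw [← euclid_decomp z]
  rw [map_sum]
  simp [smul_eq_mul]

lemma sum_coord_sq (z : EuclideanSpace ℝ (Fin N)) : ∑ j, (z j)^2 = ‖z‖^2 := by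
  rw [← real_inner_self_eq_norm_sq, PiLp.inner_apply]
  simp [RCLike.inner_apply, pow_two]

lemma hasFDerivAt_normsq (c x : EuclideanSpace ℝ (Fin N)) :
    HasFDerivAt (fun y => ‖y - c‖^2) (innerSL ℝ ((2:ℝ) • (x - c))) x := by
  have h1 : HasFDerivAt (fun y : EuclideanSpace ℝ (Fin N) => y - c)
      (ContinuousLinearMap.id ℝ _) x := (hasFDerivAt_id x).sub_const c
  have h2 := h1.inner ℝ h1
  have h3 : (fun y : EuclideanSpace ℝ (Fin N) => ⟪y - c, y - c⟫_ℝ) = fun y => ‖y - c‖^2 := by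
    funext y; rw [real_inner_self_eq_norm_sq]
  rw [h3] at h2
  refine HasFDerivAt.congr_fderiv h2 (Eq.symm ?_)
  ext h
  simp [real_inner_smul_left, real_inner_comm]
  rw [← real_inner_comm h (x - c), inner_sub_left]
  ring

lemma hasFDerivAt_logn (c x : EuclideanSpace ℝ (Fin N)) (h : x ≠ c) :
    HasFDerivAt (fun y => Real.log ‖y - c‖)
      (innerSL ℝ ((‖x - c‖^2)⁻¹ • (x - c))) x := by
  have hne : ‖x - c‖ ≠ 0 := norm_ne_zero_iff.2 (sub_ne_zero.2 h)
  have hq : (‖x - c‖^2 : ℝ) ≠ 0 := pow_ne_zero _ hne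
  have key : (fun y : EuclideanSpace ℝ (Fin N) => Real.log ‖y - c‖)
      = fun y => (1/2 : ℝ) * Real.log (‖y - c‖^2) := by
    funext y; rw [Real.log_pow]; push_cast; ring
  rw [key]
  have hlog := (Real.hasDerivAt_log hq).comp_hasFDerivAt x (hasFDerivAt_normsq c x)
  have := hlog.const_mul (1/2 : ℝ)
  refine HasFDerivAt.congr_fderiv this (Eq.symm ?_)
  ext v
  simp only [ContinuousLinearMap.smul_apply, innerSL_apply_apply, Function.comp,
    real_inner_smul_left, smul_eq_mul]
  field_simp

lemma hasGradientAt_prodrpow (a : Fin n → EuclideanSpace ℝ (Fin N)) (α : ℝ)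
    (x : EuclideanSpace ℝ (Fin N)) (hx : ∀ i, x ≠ a i) :
    HasGradientAt (fun y => ∏ i, ‖y - a i‖ ^ α)
      ((∏ i, ‖x - a i‖ ^ α) • (α • ∑ i, (‖x - a i‖^2)⁻¹ • (x - a i))) x := by
  set S : EuclideanSpace ℝ (Fin N) → ℝ := fun y => α * ∑ i, Real.log ‖y - a i‖ with hSdef
  have hS : HasFDerivAt S
      (α • ∑ i, innerSL ℝ ((‖x - a i‖^2)⁻¹ • (x - a i))) x := by
    have := (HasFDerivAt.sum (u := Finset.univ)
      (fun i _ => hasFDerivAt_logn (a i) x (hx i))).const_mul α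
    simpa using this
  have hES := (Real.hasDerivAt_exp (S x)).comp_hasFDerivAt x hS
  have hU : IsOpen {y : EuclideanSpace ℝ (Fin N) | ∀ i, y ≠ a i} := by
    have : {y : EuclideanSpace ℝ (Fin N) | ∀ i, y ≠ a i} = ⋂ i, {a i}ᶜ := by
      ext y; simp [Set.mem_iInter]
    rw [this]
    exact isOpen_iInter_of_finite fun i => isOpen_compl_singleton
  have hmem : ∀ y ∈ {y : EuclideanSpace ℝ (Fin N) | ∀ i, y ≠ a i},
      (∏ i, ‖y - a i‖ ^ α) = Real.exp (S y) := by
    intro y hy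
    have hpos : ∀ i, (0:ℝ) < ‖y - a i‖ := fun i =>
      norm_pos_iff.2 (sub_ne_zero.2 (hy i))
    rw [hSdef]
    simp only [Finset.mul_sum, Real.exp_sum]
    apply Finset.prod_congr rfl
    intro i _
    rw [Real.rpow_def_of_pos (hpos i)]
    ring_nf
  have heq : (fun y => ∏ i, ‖y - a i‖ ^ α) =ᶠ[𝓝 x] fun y => Real.exp (S y) :=
    eventually_of_mem (hU.mem_nhds (fun i => hx i)) hmem
  have hEF := hES.congr_of_eventuallyEq heq
  rw [hasGradientAt_iff_hasFDerivAt]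
  refine HasFDerivAt.congr_fderiv hEF (Eq.symm ?_)
  rw [hmem x (fun i => hx i)]
  ext v
  simp [InnerProductSpace.toDual_apply_apply, real_inner_smul_left, sum_inner,
    ContinuousLinearMap.sum_apply, Finset.mul_sum]

lemma fderiv_eq_inner_gradient (f : EuclideanSpace ℝ (Fin N) → ℝ)
    (x : EuclideanSpace ℝ (Fin N)) (hf : DifferentiableAt ℝ f x) (z : EuclideanSpace ℝ (Fin N)) :
    fderiv ℝ f x z = ⟪gradient f x, z⟫_ℝ := by
  rw [(hasGradientAt_iff_hasFDerivAt.1 hf.hasGradientAt).fderiv]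
  exact InnerProductSpace.toDual_apply_apply

lemma mpV_eq (a : Fin n → EuclideanSpace ℝ (Fin N)) (x : EuclideanSpace ℝ (Fin N))
    (hx : ∀ i, x ≠ a i) :
    mpV a x = n * (∑ i, (‖x - a i‖^2)⁻¹)
      - ‖∑ i, (‖x - a i‖^2)⁻¹ • (x - a i)‖^2 := by
  classical
  set d : Fin n → EuclideanSpace ℝ (Fin N) := fun i => (‖x - a i‖^2)⁻¹ • (x - a i) with hd
  have hq : ∀ i, (‖x - a i‖^2 : ℝ) ≠ 0 := fun i =>
    pow_ne_zero _ (norm_ne_zero_iff.2 (sub_ne_zero.2 (hx i)))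
  have hdnorm : ∀ i, ‖d i‖^2 = (‖x - a i‖^2)⁻¹ := by
    intro i
    rw [hd]
    simp only [norm_smul, mul_pow, norm_inv, norm_pow, norm_norm]
    rw [pow_two ((‖x - a i‖^2)⁻¹)]
    rw [mul_assoc, inv_mul_cancel₀ (hq i), mul_one]
  have key1 : ∀ i k, ‖a i - a k‖^2 / (‖x - a i‖^2 * ‖x - a k‖^2) = ‖d i - d k‖^2 := by
    intro i k
    have h1 : a i - a k = (x - a k) - (x - a i) := by abel
    rw [h1, norm_sub_sq_real, norm_sub_sq_real (d i) (d k), hdnorm, hdnorm]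
    have h2 : ⟪d i, d k⟫_ℝ = (‖x - a i‖^2)⁻¹ * ((‖x - a k‖^2)⁻¹ * ⟪x - a i, x - a k⟫_ℝ) := by
      rw [hd]
      simp only [real_inner_smul_left, real_inner_smul_right]
      ring
    have h3 : ⟪x - a k, x - a i⟫_ℝ = ⟪x - a i, x - a k⟫_ℝ := real_inner_comm _ _
    rw [h2, h3]
    have main : ∀ qi qk t : ℝ, qi ≠ 0 → qk ≠ 0 →
        (qk - 2*t + qi) / (qi * qk) = qi⁻¹ - 2*(qi⁻¹*(qk⁻¹*t)) + qk⁻¹ := by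
      intro qi qk t hqi hqk; field_simp
    exact main (‖x - a i‖^2) (‖x - a k‖^2) _ (hq i) (hq k)
  have hsymm : ∀ p : Fin n × Fin n, ‖d p.2 - d p.1‖^2 = ‖d p.1 - d p.2‖^2 := by
    intro p; rw [norm_sub_rev]
  have key2 : (2:ℝ) * mpV a x = ∑ i, ∑ k, ‖d i - d k‖^2 := by
    have hm : mpV a x = ∑ p ∈ Finset.univ.filter (fun p : Fin n × Fin n => p.1 < p.2),
        ‖d p.1 - d p.2‖^2 := by
      unfold mpV
      exact Finset.sum_congr rfl (fun p _ => key1 p.1 p.2)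
    have hswap : ∑ p ∈ Finset.univ.filter (fun p : Fin n × Fin n => p.2 < p.1),
        ‖d p.1 - d p.2‖^2
        = ∑ p ∈ Finset.univ.filter (fun p : Fin n × Fin n => p.1 < p.2),
        ‖d p.1 - d p.2‖^2 := by
      apply Finset.sum_bij' (fun p _ => Prod.swap p) (fun p _ => Prod.swap p)
      · intro p hp; simp at hp ⊢; exact hp
      · intro p hp; simp at hp ⊢; exact hp
      · intro p _; simp
      · intro p _; simp
      · intro p _; exact (hsymm p).symm
    have hnot : ∑ p ∈ Finset.univ.filter (fun p : Fin n × Fin n => ¬ p.1 < p.2),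
        ‖d p.1 - d p.2‖^2
        = ∑ p ∈ Finset.univ.filter (fun p : Fin n × Fin n => p.2 < p.1),
        ‖d p.1 - d p.2‖^2 := by
      symm
      apply Finset.sum_subset
      · intro p hp; simp at hp ⊢; exact le_of_lt hp
      · intro p hp hp2
        simp only [Finset.mem_filter, Finset.mem_univ, true_and, not_lt] at hp hp2
        have : p.1 = p.2 := le_antisymm hp2 hp
        rw [this]; simp
    have htot := Finset.sum_filter_add_sum_filter_not Finset.univ
      (fun p : Fin n × Fin n => p.1 < p.2) (fun p => ‖d p.1 - d p.2‖^2)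
    have hprod : ∑ p : Fin n × Fin n, ‖d p.1 - d p.2‖^2 = ∑ i, ∑ k, ‖d i - d k‖^2 := by
      rw [← Finset.univ_product_univ, Finset.sum_product]
    rw [hm]
    rw [hnot, hswap] at htot
    linarith [htot, hprod]
  have key4 : ∑ i, ∑ k, ‖d i - d k‖^2
      = 2 * ((n:ℝ) * ∑ i, (‖x - a i‖^2)⁻¹) - 2 * ‖∑ i, d i‖^2 := by
    have expand : ∀ (i k : Fin n), ‖d i - d k‖^2 = ‖d i‖^2 - 2 * ⟪d i, d k⟫_ℝ + ‖d k‖^2 :=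
      fun i k => norm_sub_sq_real _ _
    have hinner : ∑ i, ∑ k, ⟪d i, d k⟫_ℝ = ‖∑ i, d i‖^2 := by
      rw [← real_inner_self_eq_norm_sq, sum_inner]
      exact Finset.sum_congr rfl (fun i _ => (inner_sum _ _ _).symm)
    have e1 : ∀ i : Fin n, ∑ k, (‖d i‖^2 - 2 * ⟪d i, d k⟫_ℝ + ‖d k‖^2)
        = (n:ℝ) * ‖d i‖^2 - 2 * (∑ k, ⟪d i, d k⟫_ℝ) + ∑ k, ‖d k‖^2 := by
      intro i
      rw [Finset.sum_add_distrib, Finset.sum_sub_distrib, Finset.sum_const, ← Finset.mul_sum]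
      simp [Finset.card_univ, mul_comm]
    have e2 : ∑ i : Fin n, ((n:ℝ) * ‖d i‖^2 - 2 * (∑ k, ⟪d i, d k⟫_ℝ) + ∑ k, ‖d k‖^2)
        = (n:ℝ) * (∑ i, ‖d i‖^2) - 2 * (∑ i, ∑ k, ⟪d i, d k⟫_ℝ) + (n:ℝ) * (∑ k, ‖d k‖^2) := by
      rw [Finset.sum_add_distrib, Finset.sum_sub_distrib, ← Finset.mul_sum, ← Finset.mul_sum,
        Finset.sum_const]
      simp [Finset.card_univ, mul_comm]
    rw [Finset.sum_congr rfl (fun i _ => Finset.sum_congr rfl (fun k _ => expand i k))]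
    rw [Finset.sum_congr rfl (fun i (_ : i ∈ Finset.univ) => e1 i), e2, hinner]
    have hd2 : ∑ i, ‖d i‖^2 = ∑ i, (‖x - a i‖^2)⁻¹ := Finset.sum_congr rfl (fun i _ => hdnorm i)
    simp only [hd2]
    ring
  have := key2.trans key4
  linarith

lemma hasFDerivAt_coord (c : EuclideanSpace ℝ (Fin N)) (j : Fin N)
    (x : EuclideanSpace ℝ (Fin N)) :
    HasFDerivAt (fun y : EuclideanSpace ℝ (Fin N) => (y - c) j)
      (innerSL ℝ (EuclideanSpace.single j (1:ℝ))) x := by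
  have key : (fun y : EuclideanSpace ℝ (Fin N) => (y - c) j)
      = fun y => ⟪EuclideanSpace.single j (1:ℝ), y - c⟫_ℝ := by
    funext y
    rw [EuclideanSpace.inner_single_left]
    simp
  rw [key]
  have h1 : HasFDerivAt (fun y : EuclideanSpace ℝ (Fin N) => y - c)
      (ContinuousLinearMap.id ℝ _) x := (hasFDerivAt_id x).sub_const c
  have h2 := (hasFDerivAt_const (EuclideanSpace.single j (1:ℝ)) x).inner ℝ h1
  refine HasFDerivAt.congr_fderiv h2 (Eq.symm ?_)
  ext v
  simp [real_inner_comm]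

lemma w_hasfderiv (u : EuclideanSpace ℝ (Fin N) → ℝ) (hu : ContDiff ℝ 1 u)
    (c : EuclideanSpace ℝ (Fin N)) (j : Fin N) (x : EuclideanSpace ℝ (Fin N)) (h : x ≠ c) :
    ∃ L : EuclideanSpace ℝ (Fin N) →L[ℝ] ℝ,
      HasFDerivAt (fun y => u y * u y * ((y - c) j / ‖y - c‖^2)) L x ∧
      L (EuclideanSpace.single j 1) =
        2 * u x * fderiv ℝ u x (EuclideanSpace.single j 1) * ((x - c) j / ‖x - c‖^2)
        + u x * u x * (1/‖x - c‖^2 - 2 * ((x - c) j)^2 / (‖x - c‖^2)^2) := by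
  have hq : (‖x - c‖^2 : ℝ) ≠ 0 := pow_ne_zero _ (norm_ne_zero_iff.2 (sub_ne_zero.2 h))
  have hux : DifferentiableAt ℝ u x := (hu.differentiable one_ne_zero) x
  have hu2 : HasFDerivAt (fun y => u y * u y)
      (u x • fderiv ℝ u x + u x • fderiv ℝ u x) x :=
    hux.hasFDerivAt.mul hux.hasFDerivAt
  have hinv : HasFDerivAt (fun y => (‖y - c‖^2)⁻¹)
      ((-((‖x - c‖^2)^2)⁻¹) • innerSL ℝ ((2:ℝ) • (x - c))) x :=
    (hasDerivAt_inv hq).comp_hasFDerivAt x (hasFDerivAt_normsq c x)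
  have hdiv := (hasFDerivAt_coord c j x).mul hinv
  have hfull := hu2.mul hdiv
  simp only [div_eq_mul_inv]
  refine ⟨_, hfull, ?_⟩
  have e1 : (innerSL ℝ (EuclideanSpace.single j (1:ℝ)))
      (EuclideanSpace.single j (1:ℝ)) = 1 := by
    rw [innerSL_apply_apply, EuclideanSpace.inner_single_left]
    simp [EuclideanSpace.single_apply]
  have e2 : (innerSL ℝ ((2:ℝ) • (x - c))) (EuclideanSpace.single j (1:ℝ)) = 2 * (x - c) j := by
    rw [innerSL_apply_apply, real_inner_smul_left, EuclideanSpace.inner_single_right]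
    simp
  simp only [ContinuousLinearMap.add_apply, ContinuousLinearMap.smul_apply,
    ContinuousLinearMap.coe_smul', Pi.smul_apply,
    ContinuousLinearMap.sub_apply, e1, e2, smul_eq_mul, Pi.mul_apply]
  field_simp
  ring

lemma cont_of_on_open {f : EuclideanSpace ℝ (Fin N) → ℝ} {U T : Set (EuclideanSpace ℝ (Fin N))}
    (hUo : IsOpen U) (hTcl : IsClosed T) (hTU : T ⊆ U)
    (h1 : ContinuousOn f U) (h2 : ∀ y ∉ T, f y = 0) : Continuous f := by
  rw [continuous_iff_continuousAt]
  intro x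
  by_cases hx : x ∈ U
  · exact h1.continuousAt (hUo.mem_nhds hx)
  · have hxT : x ∉ T := fun h => hx (hTU h)
    have heq : f =ᶠ[𝓝 x] (fun _ => (0:ℝ)) :=
      eventually_of_mem (hTcl.isOpen_compl.mem_nhds hxT) (fun y hy => h2 y hy)
    exact (continuousAt_congr heq).2 continuousAt_const

lemma int_fderiv_zero {N : ℕ} {f : EuclideanSpace ℝ (Fin N) → ℝ} (v : EuclideanSpace ℝ (Fin N))
    (hdiff : Differentiable ℝ f) (h1 : Integrable f)
    (h2 : Integrable (fun x => fderiv ℝ f x v)) :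
    ∫ x, fderiv ℝ f x v = 0 := by
  have h := integral_mul_fderiv_eq_neg_fderiv_mul_of_integrable
    (f := f) (g := fun _ => (1:ℝ)) (v := v) (μ := volume)
    (by simpa using h2) (by simp) (by simpa using h1) (fun x _ => hdiff x) (fun x _ => differentiableAt_const (1:ℝ))
  simp only [fderiv_fun_const, Pi.zero_apply, ContinuousLinearMap.zero_apply, mul_zero, mul_one,
    integral_zero] at h
  linarith [h]

end AuxMP

set_option maxHeartbeats 2000000 in
theorem stmt11 (N n : ℕ) (hN : 3 ≤ N) (hn : 2 ≤ n)
    (Ω : Set (EuclideanSpace ℝ (Fin N))) (hΩo : IsOpen Ω)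
    (a : Fin n → EuclideanSpace ℝ (Fin N)) (ha : ∀ i, a i ∈ Ω) (hinj : Function.Injective a) :
    ∀ u : EuclideanSpace ℝ (Fin N) → ℝ, ContDiff ℝ 1 u → HasCompactSupport u →
      tsupport u ⊆ Ω \ Set.range a →
      ((∫ x in Ω, ‖gradient u x‖ ^ 2) -
          ((N : ℝ) - 2) ^ 2 / (n : ℝ) ^ 2 * ∫ x in Ω, mpV a x * u x ^ 2
        = ∫ x in Ω,
            ‖gradient (fun y => u y * ∏ i, ‖y - a i‖ ^ (((N : ℝ) - 2) / (n : ℝ))) x‖ ^ 2 *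
              ∏ i, ‖x - a i‖ ^ (-(2 * ((N : ℝ) - 2) / (n : ℝ)))) ∧
      (0 ≤ (∫ x in Ω, ‖gradient u x‖ ^ 2) -
          ((N : ℝ) - 2) ^ 2 / (n : ℝ) ^ 2 * ∫ x in Ω, mpV a x * u x ^ 2) ∧
      (u ≠ 0 →
        0 < (∫ x in Ω, ‖gradient u x‖ ^ 2) -
          ((N : ℝ) - 2) ^ 2 / (n : ℝ) ^ 2 * ∫ x in Ω, mpV a x * u x ^ 2) := by
  classical
  intro u hu hcs hsupp
  set α : ℝ := ((N:ℝ) - 2) / (n:ℝ) with hαdef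
  have hn0 : (0:ℝ) < n := by
    have : (2:ℝ) ≤ n := by exact_mod_cast hn
    linarith
  have hN2 : (0:ℝ) < (N:ℝ) - 2 := by
    have : (3:ℝ) ≤ N := by exact_mod_cast hN
    linarith
  have hα : 0 < α := div_pos hN2 hn0
  have hαn : (N:ℝ) - 2 = α * n := by rw [hαdef]; field_simp
  have hcoef : ((N:ℝ) - 2)^2 / (n:ℝ)^2 = α^2 := by rw [hαdef, div_pow]
  rw [hcoef]
  have hexp : (-(2 * ((N:ℝ) - 2) / (n:ℝ))) = -(2*α) := by rw [hαdef]; ring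
  rw [hexp]
  set v : EuclideanSpace ℝ (Fin N) → ℝ := fun y => u y * ∏ i, ‖y - a i‖ ^ α with hvdef
  set T : Set (EuclideanSpace ℝ (Fin N)) := tsupport u with hTdef
  have hTc : IsCompact T := hcs
  have hTcl : IsClosed T := isClosed_tsupport u
  set U : Set (EuclideanSpace ℝ (Fin N)) := {y | ∀ i, y ≠ a i} with hUdef
  have hUmem : ∀ {y : EuclideanSpace ℝ (Fin N)}, y ∈ U ↔ ∀ i, y ≠ a i := by
    intro y; rfl
  have hUo : IsOpen U := by
    have : U = ⋂ i, {a i}ᶜ := by ext y; simp [hUdef, Set.mem_iInter]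
    rw [this]; exact isOpen_iInter_of_finite fun i => isOpen_compl_singleton
  have hTU : T ⊆ U := by
    intro y hy
    rw [hUmem]
    intro i hcon
    exact (hsupp hy).2 ⟨i, hcon.symm⟩
  have hTΩ : T ⊆ Ω := fun y hy => (hsupp hy).1
  have hoff : ∀ {y : EuclideanSpace ℝ (Fin N)}, y ∉ T → u =ᶠ[𝓝 y] (fun _ => 0) := by
    intro y hy
    exact eventually_of_mem (hTcl.isOpen_compl.mem_nhds hy)
      (fun z hz => image_eq_zero_of_notMem_tsupport hz)
  have hudiff : Differentiable ℝ u := hu.differentiable one_ne_zero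
  have hq : ∀ (x : EuclideanSpace ℝ (Fin N)), x ∈ U → ∀ i, (‖x - a i‖^2 : ℝ) ≠ 0 :=
    fun x hx i => pow_ne_zero _ (norm_ne_zero_iff.2 (sub_ne_zero.2 (hx i)))
  have hEpos : ∀ x ∈ U, (0:ℝ) < ∏ i, ‖x - a i‖ ^ α := by
    intro x hx
    apply Finset.prod_pos
    intro i _
    exact Real.rpow_pos_of_pos (norm_pos_iff.2 (sub_ne_zero.2 (hx i))) _
  -- gradient of v on U
  have hvgrad : ∀ x ∈ U, HasGradientAt v
      ((∏ i, ‖x - a i‖ ^ α) • gradient u x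
        + (u x) • ((∏ i, ‖x - a i‖ ^ α) • (α • ∑ i, (‖x - a i‖^2)⁻¹ • (x - a i)))) x := by
    intro x hx
    have hE := hasGradientAt_prodrpow a α x hx
    have hu' := (hudiff x).hasGradientAt
    have hfd := (hasGradientAt_iff_hasFDerivAt.1 hu').mul (hasGradientAt_iff_hasFDerivAt.1 hE)
    rw [hasGradientAt_iff_hasFDerivAt]
    refine HasFDerivAt.congr_fderiv hfd (Eq.symm ?_)
    ext z
    simp only [map_add, _root_.map_smul, ContinuousLinearMap.add_apply,
      ContinuousLinearMap.smul_apply, InnerProductSpace.toDual_apply_apply, inner_add_left,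
      real_inner_smul_left, smul_eq_mul]
    ring
  -- off-support vanishing
  have hgradu_off : ∀ y ∉ T, gradient u y = 0 := fun y hy =>
    ((hasGradientAt_const y (0:ℝ)).congr_of_eventuallyEq (hoff hy)).gradient
  have hvoff : ∀ y ∉ T, v =ᶠ[𝓝 y] (fun _ => (0:ℝ)) := by
    intro y hy
    refine (hoff hy).mono (fun z hz => ?_)
    show v z = 0
    rw [hvdef]
    simp only []
    rw [show u z = 0 from hz, zero_mul]
  have hgradv_off : ∀ y ∉ T, gradient v y = 0 := fun y hy =>
    ((hasGradientAt_const y (0:ℝ)).congr_of_eventuallyEq (hvoff y hy)).gradient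
  have hu_off : ∀ y ∉ T, u y = 0 := fun y hy => image_eq_zero_of_notMem_tsupport hy
  -- the vector fields
  set w : Fin n → Fin N → EuclideanSpace ℝ (Fin N) → ℝ :=
    fun i j y => u y * u y * ((y - a i) j / ‖y - a i‖^2) with hwdef
  set F : Fin n → Fin N → EuclideanSpace ℝ (Fin N) → ℝ :=
    fun i j x => fderiv ℝ (w i j) x (EuclideanSpace.single j 1) with hFdef
  have hwoff : ∀ i j y, y ∉ T → w i j =ᶠ[𝓝 y] (fun _ => (0:ℝ)) := by
    intro i j y hy
    refine (hoff hy).mono (fun z hz => ?_)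
    show w i j z = 0
    rw [hwdef]
    simp only []
    rw [show u z = 0 from hz]
    ring
  have hFoff : ∀ i j, ∀ y ∉ T, F i j y = 0 := by
    intro i j y hy
    have h1 : fderiv ℝ (w i j) y = fderiv ℝ (fun _ => (0:ℝ)) y :=
      (hwoff i j y hy).fderiv_eq
    rw [hFdef]
    simp only []
    rw [h1, fderiv_fun_const]
    simp
  have hwdiff : ∀ i j, Differentiable ℝ (w i j) := by
    intro i j x
    by_cases hx : x ∈ U
    · obtain ⟨L, hL, -⟩ := w_hasfderiv u hu (a i) j x (hx i)
      exact hL.differentiableAt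
    · have hxT : x ∉ T := fun h => hx (hTU h)
      exact (Filter.EventuallyEq.differentiableAt_iff (hwoff i j x hxT)).2
        (differentiableAt_const 0)
  have hFval : ∀ i j x, x ∈ U → F i j x =
      2 * u x * fderiv ℝ u x (EuclideanSpace.single j 1) * ((x - a i) j / ‖x - a i‖^2)
      + u x * u x * (1/‖x - a i‖^2 - 2 * ((x - a i) j)^2 / (‖x - a i‖^2)^2) := by
    intro i j x hx
    obtain ⟨L, hL, hLval⟩ := w_hasfderiv u hu (a i) j x (hx i)
    rw [hFdef]
    simp only []
    rw [hL.fderiv]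
    exact hLval
  -- continuity toolkit
  have hcoord_cont : ∀ (c : EuclideanSpace ℝ (Fin N)) (j : Fin N),
      Continuous (fun x : EuclideanSpace ℝ (Fin N) => (x - c) j) := by
    intro c j
    have h1 : (fun x : EuclideanSpace ℝ (Fin N) => (x - c) j)
        = fun x => ⟪EuclideanSpace.single j (1:ℝ), x - c⟫_ℝ := by
      funext y; rw [EuclideanSpace.inner_single_left]; simp
    rw [h1]
    exact Continuous.inner continuous_const (continuous_id.sub continuous_const)
  have hqcont : ∀ c : EuclideanSpace ℝ (Fin N), Continuous (fun x => ‖x - c‖^2) :=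
    fun c => ((continuous_id.sub continuous_const).norm.pow 2)
  have hfd_cont : ∀ (z : EuclideanSpace ℝ (Fin N)), Continuous (fun x => fderiv ℝ u x z) :=
    fun z => (hu.continuous_fderiv one_ne_zero).clm_apply continuous_const
  have hgradu_cont : Continuous (gradient u) := by
    have h1 : gradient u = fun x => (InnerProductSpace.toDual ℝ _).symm (fderiv ℝ u x) := rfl
    rw [h1]
    exact (InnerProductSpace.toDual ℝ _).symm.continuous.comp (hu.continuous_fderiv one_ne_zero)
  have hrpow_contOn : ∀ (β : ℝ),
      ContinuousOn (fun x : EuclideanSpace ℝ (Fin N) => ∏ i, ‖x - a i‖ ^ β) U := by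
    intro β
    apply continuousOn_finset_prod
    intro i _
    intro x hx
    have hb : ‖x - a i‖ ≠ 0 := norm_ne_zero_iff.2 (sub_ne_zero.2 (hx i))
    exact (((continuous_id.sub continuous_const).norm.continuousAt).rpow_const
      (Or.inl hb)).continuousWithinAt
  have hgradv_contOn : ContinuousOn (gradient v) U := by
    have hform : ContinuousOn (fun x => (∏ i, ‖x - a i‖ ^ α) • gradient u x
        + (u x) • ((∏ i, ‖x - a i‖ ^ α) • (α • ∑ i, (‖x - a i‖^2)⁻¹ • (x - a i)))) U := by
      apply ContinuousOn.add
      · exact (hrpow_contOn α).smul hgradu_cont.continuousOn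
      · apply ContinuousOn.smul (hu.continuous.continuousOn)
        apply ContinuousOn.smul (hrpow_contOn α)
        apply ContinuousOn.fun_const_smul
        apply continuousOn_finset_sum
        intro i _
        apply ContinuousOn.fun_smul
        · exact ContinuousOn.inv₀ (hqcont (a i)).continuousOn (fun x hx => hq x hx i)
        · exact (continuous_id.sub continuous_const).continuousOn
    exact ContinuousOn.congr hform (fun x hx => (hvgrad x hx).gradient)
  -- integrands
  set A : EuclideanSpace ℝ (Fin N) → ℝ := fun x => ‖gradient u x‖ ^ 2 with hAdef
  set B : EuclideanSpace ℝ (Fin N) → ℝ := fun x => mpV a x * u x ^ 2 with hBdef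
  set C : EuclideanSpace ℝ (Fin N) → ℝ :=
    fun x => ‖gradient v x‖ ^ 2 * ∏ i, ‖x - a i‖ ^ (-(2*α)) with hCdef
  have hA_off : ∀ y ∉ T, A y = 0 := by
    intro y hy; rw [hAdef]; simp only []; rw [hgradu_off y hy]; simp
  have hB_off : ∀ y ∉ T, B y = 0 := by
    intro y hy; rw [hBdef]; simp only []; rw [hu_off y hy]; ring
  have hC_off : ∀ y ∉ T, C y = 0 := by
    intro y hy; rw [hCdef]; simp only []; rw [hgradv_off y hy]; simp
  have hA_cont : Continuous A := hgradu_cont.norm.pow 2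
  have hA_int : Integrable A :=
    hA_cont.integrable_of_hasCompactSupport (HasCompactSupport.intro hTc hA_off)
  have hB_cont : Continuous B := by
    apply cont_of_on_open hUo hTcl hTU ?_ hB_off
    apply ContinuousOn.mul ?_ ((hu.continuous.pow 2).continuousOn)
    unfold mpV
    apply continuousOn_finset_sum
    intro p _
    apply ContinuousOn.div continuousOn_const
      (((hqcont (a p.1)).mul (hqcont (a p.2))).continuousOn)
    intro x hx
    exact mul_ne_zero (hq x hx p.1) (hq x hx p.2)
  have hB_int : Integrable B :=
    hB_cont.integrable_of_hasCompactSupport (HasCompactSupport.intro hTc hB_off)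
  have hC_cont : Continuous C := by
    apply cont_of_on_open hUo hTcl hTU ?_ hC_off
    exact ((hgradv_contOn.norm.pow 2).mul (hrpow_contOn (-(2*α))))
  have hC_int : Integrable C :=
    hC_cont.integrable_of_hasCompactSupport (HasCompactSupport.intro hTc hC_off)
  have hw_off : ∀ i j, ∀ y ∉ T, w i j y = 0 := by
    intro i j y hy
    rw [hwdef]; simp only []
    rw [hu_off y hy]; ring
  have hw_cont : ∀ i j, Continuous (w i j) := by
    intro i j
    apply cont_of_on_open hUo hTcl hTU ?_ (hw_off i j)
    apply ContinuousOn.mul ((hu.continuous.mul hu.continuous).continuousOn)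
    apply ContinuousOn.div ((hcoord_cont (a i) j).continuousOn) ((hqcont (a i)).continuousOn)
    exact fun x hx => hq x hx i
  have hw_int : ∀ i j, Integrable (w i j) := fun i j =>
    (hw_cont i j).integrable_of_hasCompactSupport (HasCompactSupport.intro hTc (hw_off i j))
  have hF_cont : ∀ i j, Continuous (F i j) := by
    intro i j
    apply cont_of_on_open hUo hTcl hTU ?_ (hFoff i j)
    have hform : ContinuousOn (fun x =>
        2 * u x * fderiv ℝ u x (EuclideanSpace.single j 1) * ((x - a i) j / ‖x - a i‖^2)
        + u x * u x * (1/‖x - a i‖^2 - 2 * ((x - a i) j)^2 / (‖x - a i‖^2)^2)) U := by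
      apply ContinuousOn.add
      · apply ContinuousOn.mul
        · exact ((continuous_const.mul hu.continuous).mul
            (hfd_cont (EuclideanSpace.single j 1))).continuousOn
        · exact ContinuousOn.div ((hcoord_cont (a i) j).continuousOn)
            ((hqcont (a i)).continuousOn) (fun x hx => hq x hx i)
      · apply ContinuousOn.mul ((hu.continuous.mul hu.continuous).continuousOn)
        apply ContinuousOn.sub
        · exact ContinuousOn.div continuousOn_const ((hqcont (a i)).continuousOn)
            (fun x hx => hq x hx i)
        · exact ContinuousOn.div
            ((continuous_const.mul ((hcoord_cont (a i) j).pow 2)).continuousOn)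
            (((hqcont (a i)).pow 2).continuousOn)
            (fun x hx => pow_ne_zero _ (hq x hx i))
    exact ContinuousOn.congr hform (fun x hx => hFval i j x hx)
  have hF_int : ∀ i j, Integrable (F i j) := fun i j =>
    (hF_cont i j).integrable_of_hasCompactSupport (HasCompactSupport.intro hTc (hFoff i j))
  -- master pointwise identity
  have hkey : ∀ x, C x = A x - α^2 * B x + α * ∑ i, ∑ j, F i j x := by
    intro x
    by_cases hx : x ∈ U
    · -- main computation
      have hqx := hq x hx
      set g : EuclideanSpace ℝ (Fin N) := gradient u x with hg
      set G : EuclideanSpace ℝ (Fin N) := ∑ i, (‖x - a i‖^2)⁻¹ • (x - a i) with hG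
      set Ex : ℝ := ∏ i, ‖x - a i‖ ^ α with hEx
      have hExpos : 0 < Ex := hEpos x hx
      have hgradvx : gradient v x = Ex • g + (u x) • (Ex • (α • G)) := (hvgrad x hx).gradient
      have hsmul : Ex • g + (u x) • (Ex • (α • G)) = Ex • (g + (u x * α) • G) := by
        module
      have hnormv : ‖gradient v x‖^2 = Ex^2 * ‖g + (u x * α) • G‖^2 := by
        rw [hgradvx, hsmul, norm_smul, mul_pow, Real.norm_eq_abs, sq_abs]
      have hPx : (∏ i, ‖x - a i‖ ^ (-(2*α))) = (Ex^2)⁻¹ := by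
        rw [hEx, ← Finset.prod_pow, ← Finset.prod_inv_distrib]
        apply Finset.prod_congr rfl
        intro i _
        have hb : (0:ℝ) < ‖x - a i‖ := norm_pos_iff.2 (sub_ne_zero.2 (hx i))
        rw [← Real.rpow_natCast (‖x - a i‖ ^ α) 2, ← Real.rpow_mul hb.le,
          ← Real.rpow_neg hb.le]
        norm_num
        rw [mul_comm]
      have hCx : C x = ‖g + (u x * α) • G‖^2 := by
        rw [hCdef]
        simp only []
        rw [hnormv, hPx]
        field_simp
      have hexpand : ‖g + (u x * α) • G‖^2
          = ‖g‖^2 + 2*(u x * α)*⟪g, G⟫_ℝ + (u x * α)^2 * ‖G‖^2 := by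
        rw [norm_add_sq_real, real_inner_smul_right, norm_smul, mul_pow,
          Real.norm_eq_abs, sq_abs]
        ring
      have hBx : B x = ((n:ℝ) * (∑ i, (‖x - a i‖^2)⁻¹) - ‖G‖^2) * u x^2 := by
        rw [hBdef]
        simp only []
        rw [mpV_eq a x hx, hG]
      have hAx : A x = ‖g‖^2 := by rw [hAdef]
      have hinnerG : ⟪g, G⟫_ℝ = ∑ i, (‖x - a i‖^2)⁻¹ * ⟪g, x - a i⟫_ℝ := by
        rw [hG, inner_sum]
        exact Finset.sum_congr rfl fun i _ => real_inner_smul_right _ _ _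
      have hFsum : ∀ i, ∑ j, F i j x
          = 2 * u x * ((‖x - a i‖^2)⁻¹ * ⟪g, x - a i⟫_ℝ)
            + u x * u x * ((N:ℝ) * (‖x - a i‖^2)⁻¹ - 2 * (‖x - a i‖^2)⁻¹) := by
        intro i
        have hqi := hqx i
        rw [Finset.sum_congr rfl (fun j _ => hFval i j x hx), Finset.sum_add_distrib]
        have hDu : ⟪g, x - a i⟫_ℝ
            = ∑ j, ((x - a i) j) * fderiv ℝ u x (EuclideanSpace.single j 1) := by
          rw [hg, ← fderiv_eq_inner_gradient u x (hudiff x)]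
          exact clm_apply_eq_sum _ _
        congr 1
        · have hterm : ∀ j : Fin N,
              2 * u x * fderiv ℝ u x (EuclideanSpace.single j 1) * ((x - a i) j / ‖x - a i‖^2)
              = (2 * u x * (‖x - a i‖^2)⁻¹)
                * ((x - a i) j * fderiv ℝ u x (EuclideanSpace.single j 1)) := by
            intro j; field_simp
          rw [Finset.sum_congr rfl (fun j _ => hterm j), ← Finset.mul_sum, ← hDu]
          ring
        · rw [← Finset.mul_sum]
          congr 1
          rw [Finset.sum_sub_distrib]
          have h1 : ∑ (_ : Fin N), (1:ℝ)/‖x - a i‖^2 = (N:ℝ) * (‖x - a i‖^2)⁻¹ := by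
            rw [Finset.sum_const, Finset.card_univ, Fintype.card_fin, nsmul_eq_mul, one_div]
          have h2 : ∑ j, 2 * ((x - a i) j)^2 / (‖x - a i‖^2)^2
              = 2 * (‖x - a i‖^2)⁻¹ := by
            rw [← Finset.sum_div, ← Finset.mul_sum, sum_coord_sq]
            have hz : ‖x - a i‖^2 = ‖(x - a i : EuclideanSpace ℝ (Fin N))‖^2 := rfl
            rw [pow_two (‖x - a i‖^2)]
            field_simp
          rw [h1, h2]
      have hssum : ∑ i, (2 * u x * ((‖x - a i‖^2)⁻¹ * ⟪g, x - a i⟫_ℝ)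
            + u x * u x * ((N:ℝ) * (‖x - a i‖^2)⁻¹ - 2 * (‖x - a i‖^2)⁻¹))
          = 2 * u x * (∑ i, (‖x - a i‖^2)⁻¹ * ⟪g, x - a i⟫_ℝ)
            + u x * u x * (((N:ℝ) - 2) * ∑ i, (‖x - a i‖^2)⁻¹) := by
        rw [Finset.sum_add_distrib, ← Finset.mul_sum, ← Finset.mul_sum]
        congr 1
        congr 1
        rw [Finset.sum_sub_distrib, ← Finset.mul_sum, ← Finset.mul_sum]
        ring
      rw [hCx, hexpand, hAx, hBx, hinnerG,
        Finset.sum_congr rfl (fun i _ => hFsum i), hssum, hαn]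
      ring
    · have hxT : x ∉ T := fun h => hx (hTU h)
      rw [hA_off x hxT, hB_off x hxT, hC_off x hxT]
      have : ∀ i j, F i j x = 0 := fun i j => hFoff i j x hxT
      simp [this]
  -- integration by parts: each F integrates to zero
  have hIBP : ∀ i j, ∫ x, F i j x = 0 := by
    intro i j
    have : (fun x => F i j x) = fun x => fderiv ℝ (w i j) x (EuclideanSpace.single j 1) := by
      rw [hFdef]
    rw [this]
    exact int_fderiv_zero _ (hwdiff i j) (hw_int i j) (hF_int i j)
  have hF_int2 : Integrable (fun x => ∑ i, ∑ j, F i j x) :=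
    integrable_finset_sum _ (fun i _ => integrable_finset_sum _ (fun j _ => hF_int i j))
  have hintC : ∫ x, C x = (∫ x, A x) - α^2 * (∫ x, B x) := by
    have h1 : ∫ x, C x = ∫ x, (A x - α^2 * B x + α * ∑ i, ∑ j, F i j x) := by
      congr 1
      funext x
      exact hkey x
    have hAB_int : Integrable (fun x => A x - α^2 * B x) := hA_int.sub (hB_int.const_mul _)
    have hS_int : Integrable (fun x => α * ∑ i, ∑ j, F i j x) := hF_int2.const_mul _
    have e3 : ∫ x, (A x - α^2 * B x + α * ∑ i, ∑ j, F i j x)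
        = (∫ x, (A x - α^2 * B x)) + ∫ x, α * ∑ i, ∑ j, F i j x :=
      integral_add hAB_int hS_int
    have e4 : ∫ x, (A x - α^2 * B x) = (∫ x, A x) - ∫ x, α^2 * B x :=
      integral_sub hA_int (hB_int.const_mul _)
    have e5 : ∫ x, α^2 * B x = α^2 * ∫ x, B x := integral_const_mul _ _
    have e6 : ∫ x, α * ∑ i, ∑ j, F i j x = α * ∫ x, ∑ i, ∑ j, F i j x :=
      integral_const_mul _ _
    rw [h1, e3, e4, e5, e6]
    have h2 : ∫ x, ∑ i, ∑ j, F i j x = 0 := by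
      rw [integral_finset_sum _ (fun i _ => integrable_finset_sum _ (fun j _ => hF_int i j))]
      rw [Finset.sum_congr rfl
        (fun i _ => integral_finset_sum _ (fun j _ => hF_int i j))]
      rw [Finset.sum_congr rfl
        (fun i _ => Finset.sum_congr rfl (fun j _ => hIBP i j))]
      simp
    rw [h2]
    ring
  have hAeq : ∫ x in Ω, A x = ∫ x, A x :=
    setIntegral_eq_integral_of_forall_compl_eq_zero
      (fun x hx => hA_off x (fun hT => hx (hTΩ hT)))
  have hBeq : ∫ x in Ω, B x = ∫ x, B x :=
    setIntegral_eq_integral_of_forall_compl_eq_zero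
      (fun x hx => hB_off x (fun hT => hx (hTΩ hT)))
  have hCeq : ∫ x in Ω, C x = ∫ x, C x :=
    setIntegral_eq_integral_of_forall_compl_eq_zero
      (fun x hx => hC_off x (fun hT => hx (hTΩ hT)))
  have MAIN : (∫ x in Ω, A x) - α^2 * ∫ x in Ω, B x = ∫ x in Ω, C x := by
    rw [hAeq, hBeq, hCeq, hintC]
  have hCnonneg : ∀ x, 0 ≤ C x := by
    intro x
    rw [hCdef]
    exact mul_nonneg (sq_nonneg _)
      (Finset.prod_nonneg (fun i _ => Real.rpow_nonneg (norm_nonneg _) _))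
  refine ⟨MAIN, ?_, ?_⟩
  · rw [MAIN]
    exact setIntegral_nonneg hΩo.measurableSet (fun x _ => hCnonneg x)
  · intro hne
    rw [MAIN, hCeq]
    have hvdiff : Differentiable ℝ v := by
      intro x
      by_cases hx : x ∈ U
      · exact (hvgrad x hx).differentiableAt
      · exact (Filter.EventuallyEq.differentiableAt_iff
          (hvoff x (fun h => hx (hTU h)))).2 (differentiableAt_const 0)
    have hCex : ∃ x₁, C x₁ ≠ 0 := by
      by_contra hall
      push_neg at hall
      have hfzero : ∀ x, fderiv ℝ v x = 0 := by
        intro x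
        by_cases hx : x ∈ U
        · have hC0 := hall x
          rw [hCdef] at hC0
          simp only [] at hC0
          have hwpos : 0 < ∏ i, ‖x - a i‖ ^ (-(2*α)) :=
            Finset.prod_pos (fun i _ =>
              Real.rpow_pos_of_pos (norm_pos_iff.2 (sub_ne_zero.2 (hx i))) _)
          have hn2 : ‖gradient v x‖^2 = 0 := by
            rcases mul_eq_zero.1 hC0 with h | h
            · exact h
            · exact absurd h hwpos.ne'
          have h0 : gradient v x = 0 := by
            have := pow_eq_zero_iff (n := 2) (by norm_num) |>.1 hn2
            exact norm_eq_zero.1 this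
          have hfd := (hasGradientAt_iff_hasFDerivAt.1 (hvdiff x).hasGradientAt).fderiv
          rw [hfd, h0, map_zero]
        · have hxT : x ∉ T := fun h => hx (hTU h)
          rw [(hvoff x hxT).fderiv_eq]
          exact fderiv_const_apply 0
      have hconstv := is_const_of_fderiv_eq_zero hvdiff hfzero
      obtain ⟨x₀, hx₀⟩ : ∃ x₀, u x₀ ≠ 0 := by
        by_contra hz
        push_neg at hz
        exact hne (funext hz)
      have hx₀T : x₀ ∈ T := subset_tsupport u hx₀
      have hx₀U : x₀ ∈ U := hTU hx₀T
      have hv₀ : v x₀ ≠ 0 := by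
        rw [hvdef]
        exact mul_ne_zero hx₀ (hEpos x₀ hx₀U).ne'
      obtain ⟨R, hR⟩ := (Metric.isBounded_iff_subset_closedBall 0).1 hTc.isBounded
      have hNpos : 0 < N := by omega
      set y₀ : EuclideanSpace ℝ (Fin N) := EuclideanSpace.single ⟨0, hNpos⟩ (|R| + 1) with hy₀
      have hy₀T : y₀ ∉ T := by
        intro hmem
        have h1 := hR hmem
        rw [Metric.mem_closedBall, dist_zero_right] at h1
        have h2 : ‖y₀‖ = |R| + 1 := by
          rw [hy₀, EuclideanSpace.norm_single, Real.norm_eq_abs, abs_of_pos]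
          positivity
        rw [h2] at h1
        have h3 := le_abs_self R
        linarith
      have hvy₀ : v y₀ = 0 := by
        rw [hvdef]
        simp only []
        rw [hu_off y₀ hy₀T, zero_mul]
      exact hv₀ ((hconstv x₀ y₀).trans hvy₀)
    obtain ⟨x₁, hx₁⟩ := hCex
    rw [integral_pos_iff_support_of_nonneg (fun x => hCnonneg x) hC_int]
    have hopen : IsOpen (Function.support C) := hC_cont.isOpen_support
    exact hopen.measure_pos volume ⟨x₁, hx₁⟩
end
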